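/- Let q be an odd prime with q ≥ 7, let m ∈ {0,1}, and let e be an integer with |e| < ⌊q/2⌋ / 2. Let a be the centered representative in the interval (−q/2, q/2] of the element m·⌊q/2⌋ + e of ZMod q. Then rounding a / ⌊q/2⌋ to the nearest integer and reducing modulo 2 recovers m; i.e., ⌊a/⌊q/2⌋⌉ ≡ m (mod 2). -/

import Mathlib

lemma round_div_eq_zero (k : ℕ) (hk : 0 < k) (x : ℤ)
    (h1 : -(k : ℤ) < 2 * x) (h2 : 2 * x < (k : ℤ)) :
    round ((x : ℚ) / (k : ℚ)) = 0 := by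
  have hkQ : (0 : ℚ) < (k : ℚ) := by exact_mod_cast hk
  have h1' : -(k : ℚ) < 2 * (x : ℚ) := by exact_mod_cast h1
  have h2' : 2 * (x : ℚ) < (k : ℚ) := by exact_mod_cast h2
  rw [round_eq_zero_iff]
  constructor
  · rw [le_div_iff₀ hkQ]; linarith
  · rw [div_lt_div_iff₀ hkQ (by norm_num)]; linarith

/-- Correctness of single-bit decryption rounding: for an odd prime `q ≥ 7`, a bit `m` and an
integer noise `e` with `|e| < ⌊q/2⌋ / 2`, if `a` is the centered representative of
`m·⌊q/2⌋ + e` in `ZMod q`, then rounding `a / ⌊q/2⌋` to the nearest integer recovers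
`m` modulo 2. -/
theorem stmt_6 (q : ℕ) (hq : q.Prime) [Fact q.Prime] (hodd : Odd q) (hq7 : 7 ≤ q)
    (m : ℤ) (hm : m = 0 ∨ m = 1)
    (e : ℤ) (he : (|e| : ℚ) < ((q / 2 : ℕ) : ℚ) / 2)
    (a : ℤ) (ha : a = ((m : ZMod q) * ((q / 2 : ℕ) : ZMod q) + (e : ZMod q)).valMinAbs) :
    round ((a : ℚ) / ((q / 2 : ℕ) : ℚ)) ≡ m [ZMOD 2] := by
  have : NeZero q := ⟨hq.pos.ne'⟩
  set k : ℕ := q / 2 with hk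
  have hq2k : q = 2 * k + 1 := by rcases hodd with ⟨t, ht⟩; omega
  have hk3 : 3 ≤ k := by omega
  have heQ : (|e| : ℚ) < (k : ℚ) / 2 := by exact_mod_cast he
  have heZ : 2 * |e| < (k : ℤ) := by
    have h2 : ((2 * |e| : ℤ) : ℚ) < ((k : ℤ) : ℚ) := by push_cast; linarith
    exact_mod_cast h2
  rcases hm with rfl | rfl
  · -- m = 0 : a = e
    have ha' : a = e := by
      rw [ha]
      have : ((0 : ℤ) : ZMod q) * ((k : ℕ) : ZMod q) + (e : ZMod q) = ((e : ℤ) : ZMod q) := by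
        push_cast; ring
      rw [this, ZMod.valMinAbs_spec]
      refine ⟨rfl, ?_, ?_⟩ <;> push_cast <;>
        [linarith [neg_abs_le e]; linarith [le_abs_self e]]
    subst ha'
    rw [round_div_eq_zero k (by omega) a (by linarith [neg_abs_le a])
      (by linarith [le_abs_self a])]
  · -- m = 1
    by_cases hpos : e ≤ 0
    · -- a = k + e
      have ha' : a = (k : ℤ) + e := by
        rw [ha]
        have : ((1 : ℤ) : ZMod q) * ((k : ℕ) : ZMod q) + (e : ZMod q)
            = (((k : ℤ) + e : ℤ) : ZMod q) := by push_cast; ring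
        rw [this, ZMod.valMinAbs_spec]
        refine ⟨rfl, ?_, ?_⟩ <;> push_cast <;> [linarith [neg_abs_le e]; omega]
      subst ha'
      have hsplit : ((((k : ℤ) + e : ℤ) : ℚ)) / (k : ℚ) = (e : ℚ) / (k : ℚ) + (1 : ℤ) := by
        have hkQ : ((k : ℚ)) ≠ 0 := by positivity
        push_cast; field_simp; ring
      rw [hsplit, round_add_intCast,
        round_div_eq_zero k (by omega) e (by linarith [neg_abs_le e])
          (by linarith [le_abs_self e])]
      decide
    · -- e ≥ 1, a = e - k - 1
      push_neg at hpos
      have ha' : a = e - (k : ℤ) - 1 := by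
        rw [ha]
        have : ((1 : ℤ) : ZMod q) * ((k : ℕ) : ZMod q) + (e : ZMod q)
            = ((e - (k : ℤ) - 1 : ℤ) : ZMod q) := by
          have hqz : ((q : ℤ) : ZMod q) = 0 := by
            exact_mod_cast ZMod.natCast_self q
          have h2 : ((e - (k : ℤ) - 1 : ℤ) : ZMod q)
              = ((e + (k : ℤ) - (q : ℤ) : ℤ) : ZMod q) := by
            congr 1; omega
          rw [h2]; push_cast [hqz]; ring
        rw [this, ZMod.valMinAbs_spec]
        refine ⟨rfl, ?_, ?_⟩ <;> push_cast <;> [omega; linarith [le_abs_self e]]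
      subst ha'
      have hsplit : (((e - (k : ℤ) - 1 : ℤ) : ℚ)) / (k : ℚ)
          = (((e - 1 : ℤ) : ℚ)) / (k : ℚ) + ((-1 : ℤ) : ℚ) := by
        have hkQ : ((k : ℚ)) ≠ 0 := by positivity
        push_cast; field_simp; ring
      rw [hsplit, round_add_intCast,
        round_div_eq_zero k (by omega) (e - 1) (by omega)
          (by linarith [le_abs_self e])]
      decide
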